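/- Let d* be the per-group-threshold rule d*(x,z) = 1{p(x,z) ≥ t_z} with group-wise positive rates q_a, q_b, and let d' be any other decision rule achieving the same group-wise positive rates q_a and q_b. Then u(d*, 1/2) − u(d', 1/2) = (E[p − 1/2 | d*=1, d'=0] − E[p − 1/2 | d*=0, d'=1])·P(d*=1, d'=0) ≥ 0, with equality if and only if P(d*(X,Z) ≠ d'(X,Z)) = 0. -/

import Mathlib

open MeasureTheory

/-- For the per-group-threshold rule `d*` and any other rule
`d'` with the same group-wise positive rates,
`u(d*,1/2) − u(d',1/2) = (E[p−1/2 | d*=1,d'=0] − E[p−1/2 | d*=0,d'=1])·P(d*=1,d'=0) ≥ 0`,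
with equality iff `P(d* ≠ d') = 0`. -/
theorem threshold_vs_other_rule_utility_gap
    {Ω 𝒳 : Type*} [MeasurableSpace Ω] [MeasurableSpace 𝒳]
    (μ : Measure Ω) [IsProbabilityMeasure μ]
    (X : Ω → 𝒳) (Z : Ω → Bool)
    (hX : Measurable X) (hZ : Measurable Z)
    (p : 𝒳 → Bool → ℝ) (hp : ∀ z, Measurable fun x => p x z)
    (hp01 : ∀ x z, p x z ∈ Set.Icc (0 : ℝ) 1)
    (hZpos : ∀ z, 0 < (μ {ω | Z ω = z}).toReal)
    (hatomless : ∀ z r, μ ({ω | p (X ω) (Z ω) = r} ∩ {ω | Z ω = z}) = 0)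
    (t : Bool → ℝ)
    (dstar : 𝒳 → Bool → ℝ)
    (hdstar : ∀ x z, dstar x z = if t z ≤ p x z then 1 else 0)
    (d' : 𝒳 → Bool → ℝ)
    (hd'01 : ∀ x z, d' x z = 0 ∨ d' x z = 1)
    (hd'meas : ∀ z, Measurable fun x => d' x z)
    -- d' achieves the same group-wise positive rates as d*
    (hrates : ∀ z,
      (μ ({ω | d' (X ω) (Z ω) = 1} ∩ {ω | Z ω = z})).toReal
        = (μ ({ω | dstar (X ω) (Z ω) = 1} ∩ {ω | Z ω = z})).toReal) :
    (∫ ω, dstar (X ω) (Z ω) * (p (X ω) (Z ω) - 1 / 2) ∂μ)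
      - (∫ ω, d' (X ω) (Z ω) * (p (X ω) (Z ω) - 1 / 2) ∂μ)
    = (((∫ ω in {ω | dstar (X ω) (Z ω) = 1 ∧ d' (X ω) (Z ω) = 0},
          (p (X ω) (Z ω) - 1 / 2) ∂μ)
        / (μ {ω | dstar (X ω) (Z ω) = 1 ∧ d' (X ω) (Z ω) = 0}).toReal)
      - ((∫ ω in {ω | dstar (X ω) (Z ω) = 0 ∧ d' (X ω) (Z ω) = 1},
          (p (X ω) (Z ω) - 1 / 2) ∂μ)
        / (μ {ω | dstar (X ω) (Z ω) = 0 ∧ d' (X ω) (Z ω) = 1}).toReal))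
      * (μ {ω | dstar (X ω) (Z ω) = 1 ∧ d' (X ω) (Z ω) = 0}).toReal
    ∧ 0 ≤ (∫ ω, dstar (X ω) (Z ω) * (p (X ω) (Z ω) - 1 / 2) ∂μ)
          - (∫ ω, d' (X ω) (Z ω) * (p (X ω) (Z ω) - 1 / 2) ∂μ)
    ∧ ((∫ ω, dstar (X ω) (Z ω) * (p (X ω) (Z ω) - 1 / 2) ∂μ)
          = (∫ ω, d' (X ω) (Z ω) * (p (X ω) (Z ω) - 1 / 2) ∂μ)
        ↔ μ {ω | dstar (X ω) (Z ω) ≠ d' (X ω) (Z ω)} = 0) := by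
  classical
  -- basic measurability
  have hf : Measurable (fun ω => p (X ω) (Z ω)) := by
    have h : (fun ω => p (X ω) (Z ω))
        = fun ω => if Z ω = true then p (X ω) true else p (X ω) false := by
      funext ω; cases h : Z ω <;> simp [h]
    rw [h]
    exact Measurable.ite (hZ (measurableSet_singleton true))
      ((hp true).comp hX) ((hp false).comp hX)
  have hD'm : Measurable (fun ω => d' (X ω) (Z ω)) := by
    have h : (fun ω => d' (X ω) (Z ω))
        = fun ω => if Z ω = true then d' (X ω) true else d' (X ω) false := by
      funext ω; cases h : Z ω <;> simp [h]
    rw [h]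
    exact Measurable.ite (hZ (measurableSet_singleton true))
      ((hd'meas true).comp hX) ((hd'meas false).comp hX)
  have htZ : Measurable (fun ω => t (Z ω)) := (Measurable.of_discrete (f := t)).comp hZ
  have hDm : Measurable (fun ω => dstar (X ω) (Z ω)) := by
    have h : (fun ω => dstar (X ω) (Z ω))
        = fun ω => if t (Z ω) ≤ p (X ω) (Z ω) then (1 : ℝ) else 0 := by
      funext ω; exact hdstar _ _
    rw [h]
    exact Measurable.ite (measurableSet_le htZ hf) measurable_const measurable_const
  have hD01 : ∀ ω, dstar (X ω) (Z ω) = 0 ∨ dstar (X ω) (Z ω) = 1 := by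
    intro ω; rw [hdstar]; split <;> simp
  -- key sets
  set A : Set Ω := {ω | dstar (X ω) (Z ω) = 1 ∧ d' (X ω) (Z ω) = 0} with hA_def
  set B : Set Ω := {ω | dstar (X ω) (Z ω) = 0 ∧ d' (X ω) (Z ω) = 1} with hB_def
  have hAm : MeasurableSet A :=
    (hDm (measurableSet_singleton 1)).inter (hD'm (measurableSet_singleton 0))
  have hBm : MeasurableSet B :=
    (hDm (measurableSet_singleton 0)).inter (hD'm (measurableSet_singleton 1))
  have hZm : ∀ z, MeasurableSet {ω | Z ω = z} := fun z => hZ (measurableSet_singleton z)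
  -- integrability of p - c
  have hint : ∀ c : ℝ, Integrable (fun ω => p (X ω) (Z ω) - c) μ := by
    intro c
    refine (integrable_const (1 + |c|)).mono' ((hf.sub measurable_const).aestronglyMeasurable) ?_
    refine ae_of_all _ fun ω => ?_
    have h1 := (hp01 (X ω) (Z ω)).1
    have h2 := (hp01 (X ω) (Z ω)).2
    rw [Real.norm_eq_abs]
    have : |p (X ω) (Z ω) - c| ≤ |p (X ω) (Z ω)| + |c| := abs_sub _ _
    have h3 : |p (X ω) (Z ω)| ≤ 1 := by rw [abs_le]; constructor <;> linarith
    linarith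
  have hmul_int : ∀ (D : Ω → ℝ), Measurable D → (∀ ω, D ω = 0 ∨ D ω = 1) →
      Integrable (fun ω => D ω * (p (X ω) (Z ω) - 1 / 2)) μ := by
    intro D hDmeas hD01'
    refine (integrable_const (2 : ℝ)).mono'
      ((hDmeas.mul (hf.sub measurable_const)).aestronglyMeasurable) ?_
    refine ae_of_all _ fun ω => ?_
    have h1 := (hp01 (X ω) (Z ω)).1
    have h2 := (hp01 (X ω) (Z ω)).2
    rw [Real.norm_eq_abs]
    rcases hD01' ω with h | h <;> rw [h] <;> rw [abs_le] <;> constructor <;> simp <;> linarith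
  have hDg_int := hmul_int _ hDm hD01
  have hD'g_int := hmul_int _ hD'm (fun ω => hd'01 (X ω) (Z ω))
  -- pointwise identity
  have hpt : ∀ ω, dstar (X ω) (Z ω) * (p (X ω) (Z ω) - 1 / 2)
      - d' (X ω) (Z ω) * (p (X ω) (Z ω) - 1 / 2)
      = A.indicator (fun ω => p (X ω) (Z ω) - 1 / 2) ω
        - B.indicator (fun ω => p (X ω) (Z ω) - 1 / 2) ω := by
    intro ω
    rcases hD01 ω with h1 | h1 <;> rcases hd'01 (X ω) (Z ω) with h2 | h2 <;>
      simp [Set.indicator_apply, hA_def, hB_def, Set.mem_setOf_eq, h1, h2] <;> ring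
  -- the main difference equals ∫_A - ∫_B
  have key : (∫ ω, dstar (X ω) (Z ω) * (p (X ω) (Z ω) - 1 / 2) ∂μ)
      - (∫ ω, d' (X ω) (Z ω) * (p (X ω) (Z ω) - 1 / 2) ∂μ)
      = (∫ ω in A, (p (X ω) (Z ω) - 1 / 2) ∂μ)
        - (∫ ω in B, (p (X ω) (Z ω) - 1 / 2) ∂μ) := by
    rw [← integral_sub hDg_int hD'g_int]
    rw [← integral_indicator hAm, ← integral_indicator hBm]
    rw [← integral_sub ((hint (1/2)).indicator hAm) ((hint (1/2)).indicator hBm)]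
    exact integral_congr_ae (ae_of_all _ hpt)
  -- group slices
  set Az : Bool → Set Ω := fun z => A ∩ {ω | Z ω = z} with hAz_def
  set Bz : Bool → Set Ω := fun z => B ∩ {ω | Z ω = z} with hBz_def
  have hAzm : ∀ z, MeasurableSet (Az z) := fun z => hAm.inter (hZm z)
  have hBzm : ∀ z, MeasurableSet (Bz z) := fun z => hBm.inter (hZm z)
  -- per-group equality of measures
  have hAzBz : ∀ z, (μ (Az z)).toReal = (μ (Bz z)).toReal := by
    intro z
    set C : Set Ω := {ω | dstar (X ω) (Z ω) = 1 ∧ d' (X ω) (Z ω) = 1} ∩ {ω | Z ω = z} with hC_def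
    have hCm : MeasurableSet C :=
      ((hDm (measurableSet_singleton 1)).inter (hD'm (measurableSet_singleton 1))).inter (hZm z)
    have hU1 : {ω | dstar (X ω) (Z ω) = 1} ∩ {ω | Z ω = z} = Az z ∪ C := by
      ext ω
      simp only [hAz_def, hA_def, hC_def, Set.mem_inter_iff, Set.mem_union, Set.mem_setOf_eq]
      rcases hd'01 (X ω) (Z ω) with h | h <;> simp [h] <;> tauto
    have hU2 : {ω | d' (X ω) (Z ω) = 1} ∩ {ω | Z ω = z} = Bz z ∪ C := by
      ext ω
      simp only [hBz_def, hB_def, hC_def, Set.mem_inter_iff, Set.mem_union, Set.mem_setOf_eq]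
      rcases hD01 ω with h | h <;> simp [h] <;> tauto
    have hdis1 : Disjoint (Az z) C := by
      rw [Set.disjoint_left]
      intro ω hω hω'
      simp only [hAz_def, hA_def, hC_def, Set.mem_inter_iff, Set.mem_setOf_eq] at hω hω'
      rw [hω.1.2] at hω'; exact zero_ne_one hω'.1.2
    have hdis2 : Disjoint (Bz z) C := by
      rw [Set.disjoint_left]
      intro ω hω hω'
      simp only [hBz_def, hB_def, hC_def, Set.mem_inter_iff, Set.mem_setOf_eq] at hω hω'
      rw [hω.1.1] at hω'; exact zero_ne_one hω'.1.1
    have h1 : (μ ({ω | dstar (X ω) (Z ω) = 1} ∩ {ω | Z ω = z})).toReal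
        = (μ (Az z)).toReal + (μ C).toReal := by
      rw [hU1, measure_union hdis1 hCm, ENNReal.toReal_add (measure_ne_top μ _) (measure_ne_top μ _)]
    have h2 : (μ ({ω | d' (X ω) (Z ω) = 1} ∩ {ω | Z ω = z})).toReal
        = (μ (Bz z)).toReal + (μ C).toReal := by
      rw [hU2, measure_union hdis2 hCm, ENNReal.toReal_add (measure_ne_top μ _) (measure_ne_top μ _)]
    have := hrates z
    rw [h1, h2] at this
    linarith
  -- splitting A and B over the two groups
  have hAsplit : A = Az true ∪ Az false := by
    ext ω
    simp only [hAz_def, Set.mem_union, Set.mem_inter_iff, Set.mem_setOf_eq]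
    cases h : Z ω <;> simp [h] <;> tauto
  have hBsplit : B = Bz true ∪ Bz false := by
    ext ω
    simp only [hBz_def, Set.mem_union, Set.mem_inter_iff, Set.mem_setOf_eq]
    cases h : Z ω <;> simp [h] <;> tauto
  have hAdis : Disjoint (Az true) (Az false) := by
    rw [Set.disjoint_left]; intro ω h1 h2
    have e1 : Z ω = true := h1.2
    have e2 : Z ω = false := h2.2
    rw [e1] at e2; exact Bool.noConfusion e2
  have hBdis : Disjoint (Bz true) (Bz false) := by
    rw [Set.disjoint_left]; intro ω h1 h2
    have e1 : Z ω = true := h1.2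
    have e2 : Z ω = false := h2.2
    rw [e1] at e2; exact Bool.noConfusion e2
  have hmA : (μ A).toReal = (μ (Az true)).toReal + (μ (Az false)).toReal := by
    rw [hAsplit, measure_union hAdis (hAzm false),
      ENNReal.toReal_add (measure_ne_top μ _) (measure_ne_top μ _)]
  have hmB : (μ B).toReal = (μ (Bz true)).toReal + (μ (Bz false)).toReal := by
    rw [hBsplit, measure_union hBdis (hBzm false),
      ENNReal.toReal_add (measure_ne_top μ _) (measure_ne_top μ _)]
  have hmAB : (μ A).toReal = (μ B).toReal := by
    rw [hmA, hmB, hAzBz true, hAzBz false]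
  -- set integral of (p - 1/2) decomposed with threshold constant
  have hsplitg : ∀ (s : Set Ω), MeasurableSet s → ∀ c : ℝ,
      (∫ ω in s, (p (X ω) (Z ω) - 1 / 2) ∂μ)
        = (∫ ω in s, (p (X ω) (Z ω) - c) ∂μ) + (c - 1 / 2) * (μ s).toReal := by
    intro s hs c
    have h1 : (∫ ω in s, (p (X ω) (Z ω) - 1 / 2) ∂μ)
        = ∫ ω in s, ((p (X ω) (Z ω) - c) + (c - 1 / 2)) ∂μ := by
      congr 1; funext ω; ring
    rw [h1, integral_add ((hint c).integrableOn) (integrableOn_const (measure_ne_top μ s))]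
    rw [setIntegral_const, smul_eq_mul, mul_comm]
    rfl
  -- integral split over groups
  have hIsplit : ∀ (S : Bool → Set Ω), (∀ z, MeasurableSet (S z)) →
      Disjoint (S true) (S false) →
      (∫ ω in (S true ∪ S false), (p (X ω) (Z ω) - 1 / 2) ∂μ)
        = (∫ ω in S true, (p (X ω) (Z ω) - 1 / 2) ∂μ)
          + (∫ ω in S false, (p (X ω) (Z ω) - 1 / 2) ∂μ) := by
    intro S hSm hSd
    exact setIntegral_union hSd (hSm false) ((hint (1/2)).integrableOn) ((hint (1/2)).integrableOn)
  -- nonnegativity facts on slices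
  have hA_ge : ∀ z ω, ω ∈ Az z → t z ≤ p (X ω) (Z ω) := by
    intro z ω hω
    have h1 : dstar (X ω) (Z ω) = 1 := hω.1.1
    have hz : Z ω = z := hω.2
    rw [hdstar, hz] at h1
    rw [hz]
    by_contra hcon
    rw [if_neg hcon] at h1
    exact zero_ne_one h1
  have hB_le : ∀ z ω, ω ∈ Bz z → p (X ω) (Z ω) ≤ t z := by
    intro z ω hω
    have h1 : dstar (X ω) (Z ω) = 0 := hω.1.1
    have hz : Z ω = z := hω.2
    rw [hdstar, hz] at h1
    rw [hz]
    by_contra hcon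
    rw [if_pos (le_of_lt (not_le.mp hcon))] at h1
    exact one_ne_zero h1
  have hIA_nonneg : ∀ z, 0 ≤ ∫ ω in Az z, (p (X ω) (Z ω) - t z) ∂μ := by
    intro z
    exact setIntegral_nonneg (hAzm z) fun ω hω => by linarith [hA_ge z ω hω]
  have hIB_nonpos : ∀ z, (∫ ω in Bz z, (p (X ω) (Z ω) - t z) ∂μ) ≤ 0 := by
    intro z
    exact setIntegral_nonpos (hBzm z) fun ω hω => by linarith [hB_le z ω hω]
  -- per-group difference
  have hgroupdiff : ∀ z,
      (∫ ω in Az z, (p (X ω) (Z ω) - 1 / 2) ∂μ) - (∫ ω in Bz z, (p (X ω) (Z ω) - 1 / 2) ∂μ)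
        = (∫ ω in Az z, (p (X ω) (Z ω) - t z) ∂μ) - (∫ ω in Bz z, (p (X ω) (Z ω) - t z) ∂μ) := by
    intro z
    rw [hsplitg (Az z) (hAzm z) (t z), hsplitg (Bz z) (hBzm z) (t z), hAzBz z]
    ring
  -- total difference as sum of per-group differences
  have htotal : (∫ ω in A, (p (X ω) (Z ω) - 1 / 2) ∂μ) - (∫ ω in B, (p (X ω) (Z ω) - 1 / 2) ∂μ)
      = ((∫ ω in Az true, (p (X ω) (Z ω) - t true) ∂μ)
          - (∫ ω in Bz true, (p (X ω) (Z ω) - t true) ∂μ))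
        + ((∫ ω in Az false, (p (X ω) (Z ω) - t false) ∂μ)
          - (∫ ω in Bz false, (p (X ω) (Z ω) - t false) ∂μ)) := by
    rw [hAsplit, hBsplit, hIsplit Az hAzm hAdis, hIsplit Bz hBzm hBdis,
      ← hgroupdiff true, ← hgroupdiff false]
    ring
  have hdiff_nonneg : 0 ≤ (∫ ω in A, (p (X ω) (Z ω) - 1 / 2) ∂μ)
      - (∫ ω in B, (p (X ω) (Z ω) - 1 / 2) ∂μ) := by
    rw [htotal]
    have := hIA_nonneg true; have := hIA_nonneg false
    have := hIB_nonpos true; have := hIB_nonpos false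
    linarith
  -- slice-null lemma from zero integral
  have hslice_null : ∀ (s : Set Ω) (z : Bool), MeasurableSet s → s ⊆ {ω | Z ω = z} →
      (∀ᵐ ω ∂μ.restrict s, p (X ω) (Z ω) = t z) → μ s = 0 := by
    intro s z hsm hsub hae
    have hNe : MeasurableSet {ω | ¬ p (X ω) (Z ω) = t z} :=
      (hf (measurableSet_singleton (t z))).compl
    have hN : μ ({ω | ¬ p (X ω) (Z ω) = t z} ∩ s) = 0 := by
      have h1 := ae_iff.mp hae
      rwa [Measure.restrict_apply hNe] at h1
    have hsub2 : s ⊆ ({ω | ¬ p (X ω) (Z ω) = t z} ∩ s)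
        ∪ ({ω | p (X ω) (Z ω) = t z} ∩ {ω | Z ω = z}) := by
      intro ω hω
      by_cases hc : p (X ω) (Z ω) = t z
      · exact Or.inr ⟨hc, hsub hω⟩
      · exact Or.inl ⟨hc, hω⟩
    refine le_antisymm ?_ (zero_le)
    calc μ s ≤ μ (({ω | ¬ p (X ω) (Z ω) = t z} ∩ s)
        ∪ ({ω | p (X ω) (Z ω) = t z} ∩ {ω | Z ω = z})) := measure_mono hsub2
      _ ≤ μ ({ω | ¬ p (X ω) (Z ω) = t z} ∩ s)
          + μ ({ω | p (X ω) (Z ω) = t z} ∩ {ω | Z ω = z}) := measure_union_le _ _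
      _ = 0 := by rw [hN, hatomless z (t z)]; simp
  refine ⟨?_, by rw [key]; exact hdiff_nonneg, ?_⟩
  · -- the conditional-expectation formula
    rw [key]
    by_cases h : (μ A).toReal = 0
    · have hA0 : μ A = 0 := by
        rcases ENNReal.toReal_eq_zero_iff _ |>.mp h with h' | h'
        · exact h'
        · exact absurd h' (measure_ne_top μ A)
      have hB0 : μ B = 0 := by
        have hb : (μ B).toReal = 0 := by rw [← hmAB]; exact h
        rcases ENNReal.toReal_eq_zero_iff _ |>.mp hb with h' | h'
        · exact h'
        · exact absurd h' (measure_ne_top μ B)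
      have hIA : (∫ ω in A, (p (X ω) (Z ω) - 1 / 2) ∂μ) = 0 := by
        rw [Measure.restrict_eq_zero.mpr hA0]; exact integral_zero_measure _
      have hIB : (∫ ω in B, (p (X ω) (Z ω) - 1 / 2) ∂μ) = 0 := by
        rw [Measure.restrict_eq_zero.mpr hB0]; exact integral_zero_measure _
      rw [hIA, hIB, h]
      simp
    · rw [← hmAB]
      rw [sub_mul, div_mul_cancel₀ _ h, div_mul_cancel₀ _ h]
  · constructor
    · intro heq
      have hzero : (∫ ω in A, (p (X ω) (Z ω) - 1 / 2) ∂μ)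
          - (∫ ω in B, (p (X ω) (Z ω) - 1 / 2) ∂μ) = 0 := by
        rw [← key, heq]; ring
      rw [htotal] at hzero
      have hATz : ∀ z, (∫ ω in Az z, (p (X ω) (Z ω) - t z) ∂μ) = 0 := by
        intro z
        have := hIA_nonneg true; have := hIA_nonneg false
        have := hIB_nonpos true; have := hIB_nonpos false
        cases z <;> linarith
      have hBTz : ∀ z, (∫ ω in Bz z, (p (X ω) (Z ω) - t z) ∂μ) = 0 := by
        intro z
        have := hIA_nonneg true; have := hIA_nonneg false
        have := hIB_nonpos true; have := hIB_nonpos false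
        cases z <;> linarith
      have hAz0 : ∀ z, μ (Az z) = 0 := by
        intro z
        have hnn : 0 ≤ᵐ[μ.restrict (Az z)] fun ω => p (X ω) (Z ω) - t z :=
          (ae_restrict_iff' (hAzm z)).2 (ae_of_all _ fun ω hω => by simpa using sub_nonneg.2 (hA_ge z ω hω))
        have hae := (setIntegral_eq_zero_iff_of_nonneg_ae hnn
          ((hint (t z)).integrableOn)).1 (hATz z)
        refine hslice_null (Az z) z (hAzm z) (fun ω hω => hω.2) ?_
        filter_upwards [hae] with ω hω
        have h2 : p (X ω) (Z ω) - t z = 0 := by simpa using hω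
        linarith
      have hBz0 : ∀ z, μ (Bz z) = 0 := by
        intro z
        have hnn : 0 ≤ᵐ[μ.restrict (Bz z)] fun ω => t z - p (X ω) (Z ω) :=
          (ae_restrict_iff' (hBzm z)).2 (ae_of_all _ fun ω hω => by simpa using sub_nonneg.2 (hB_le z ω hω))
        have hint' : Integrable (fun ω => t z - p (X ω) (Z ω)) μ := by
          have h := (hint (t z)).neg
          have he : (fun ω => t z - p (X ω) (Z ω))
              = fun ω => -(p (X ω) (Z ω) - t z) := by funext ω; ring
          rw [he]; exact h
        have hIzero : (∫ ω in Bz z, (t z - p (X ω) (Z ω)) ∂μ) = 0 := by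
          have hneg : (∫ ω in Bz z, (t z - p (X ω) (Z ω)) ∂μ)
              = - ∫ ω in Bz z, (p (X ω) (Z ω) - t z) ∂μ := by
            rw [← integral_neg]; congr 1; funext ω; ring
          rw [hneg, hBTz z]; ring
        have hae := (setIntegral_eq_zero_iff_of_nonneg_ae hnn hint'.integrableOn).1 hIzero
        refine hslice_null (Bz z) z (hBzm z) (fun ω hω => hω.2) ?_
        filter_upwards [hae] with ω hω
        have h2 : t z - p (X ω) (Z ω) = 0 := by simpa using hω
        linarith
      have hA0 : μ A = 0 := by
        rw [hAsplit]; exact measure_union_null (hAz0 true) (hAz0 false)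
      have hB0 : μ B = 0 := by
        rw [hBsplit]; exact measure_union_null (hBz0 true) (hBz0 false)
      have hsubAB : {ω | dstar (X ω) (Z ω) ≠ d' (X ω) (Z ω)} ⊆ A ∪ B := by
        intro ω hω
        rcases hD01 ω with h1 | h1 <;> rcases hd'01 (X ω) (Z ω) with h2 | h2
        · exact absurd (h1.trans h2.symm) hω
        · exact Or.inr ⟨h1, h2⟩
        · exact Or.inl ⟨h1, h2⟩
        · exact absurd (h1.trans h2.symm) hω
      exact measure_mono_null hsubAB (measure_union_null hA0 hB0)
    · intro h0
      have hA0 : μ A = 0 := by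
        refine measure_mono_null ?_ h0
        intro ω hω
        show dstar (X ω) (Z ω) ≠ d' (X ω) (Z ω)
        rw [hω.1, hω.2]; exact one_ne_zero
      have hB0 : μ B = 0 := by
        refine measure_mono_null ?_ h0
        intro ω hω
        show dstar (X ω) (Z ω) ≠ d' (X ω) (Z ω)
        rw [hω.1, hω.2]; exact zero_ne_one
      have hIA : (∫ ω in A, (p (X ω) (Z ω) - 1 / 2) ∂μ) = 0 := by
        rw [Measure.restrict_eq_zero.mpr hA0]; exact integral_zero_measure _
      have hIB : (∫ ω in B, (p (X ω) (Z ω) - 1 / 2) ∂μ) = 0 := by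
        rw [Measure.restrict_eq_zero.mpr hB0]; exact integral_zero_measure _
      have := key
      rw [hIA, hIB] at this
      linarith
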